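/- arXiv:1912.13322 — 2 statements merged into one kernel-verified Lean document; each statement's English description precedes it below -/
import Mathlib

section
/- Let 𝔫 be the 5-dimensional real Lie algebra with orthonormal basis {E₁,…,E₅} and non-zero brackets [E₁,E₂] = s·E₅ and [E₃,E₄] = m·E₅, where s ≥ m > 0 (the two-step nilpotent Lie algebra with one-dimensional center). Then there exist c ∈ ℝ and a derivation D of 𝔫 with Ric = c·Id + D if and only if s = m; moreover, in that case necessarily c = −2m². -/
open scoped BigOperators

namespace Nilsoliton0

noncomputable section

abbrev V : Type := Fin 5 → ℝ

/-- The orthonormal basis vectors E₁,…,E₅ (indexed 0,…,4). -/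
def E (i : Fin 5) : V := Pi.single i 1

/-- The inner product making `E` an orthonormal basis. -/
def ip (x y : V) : ℝ := ∑ i, x i * y i

/-- `D` is a derivation of the bracket `br`. -/
def IsDerivation (br : V → V → V) (D : V →ₗ[ℝ] V) : Prop :=
  ∀ X Y : V, D (br X Y) = br (D X) Y + br X (D Y)

/-- `Ric` is the Ricci operator of the nilpotent Lie group with left-invariant
metric determined by the bracket `br` and the orthonormal basis `E`. -/
def IsRicci (br : V → V → V) (Ric : V →ₗ[ℝ] V) : Prop :=
  ∀ X Y : V, ip (Ric X) Y =
      -(1/2) * (∑ i : Fin 5, ip (br X (E i)) (br Y (E i)))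
      + (1/4) * (∑ i : Fin 5, ∑ j : Fin 5, ip (br (E i) (E j)) X * ip (br (E i) (E j)) Y)

/-- The bracket: [E₁,E₂] = s·E₅, [E₃,E₄] = m·E₅. -/
def br (s m : ℝ) (X Y : V) : V :=
  (s * (X 0 * Y 1 - X 1 * Y 0) + m * (X 2 * Y 3 - X 3 * Y 2)) • E 4

lemma ip_single (v : V) (j : Fin 5) : ip v (E j) = v j := by
  simp [ip, E, Pi.single_apply]

lemma ric_apply (s m : ℝ) (Ric : V →ₗ[ℝ] V) (h : IsRicci (br s m) Ric) (X : V) (j : Fin 5) :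
    Ric X j = ![-(s^2)/2, -(s^2)/2, -(m^2)/2, -(m^2)/2, (s^2+m^2)/2] j * X j := by
  have h1 := h X (E j)
  rw [ip_single] at h1
  rw [h1]
  fin_cases j <;> simp [br, E, ip, Fin.sum_univ_five, Pi.single_apply] <;> ring

def diagMap (d : Fin 5 → ℝ) : V →ₗ[ℝ] V where
  toFun X := fun j => d j * X j
  map_add' X Y := by funext j; simp [mul_add]
  map_smul' r X := by funext j; simp [smul_eq_mul]; ring

theorem stmt0 (s m : ℝ) (hsm : s ≥ m) (hm : 0 < m)
    (Ric : V →ₗ[ℝ] V) (hRic : IsRicci (br s m) Ric) :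
    ((∃ (c : ℝ) (D : V →ₗ[ℝ] V), IsDerivation (br s m) D ∧
        Ric = c • (LinearMap.id : V →ₗ[ℝ] V) + D) ↔ (s = m)) ∧
    (∀ (c : ℝ) (D : V →ₗ[ℝ] V), IsDerivation (br s m) D →
        Ric = c • (LinearMap.id : V →ₗ[ℝ] V) + D → c = -2 * m ^ 2) := by
  have hs : 0 < s := lt_of_lt_of_le hm hsm
  -- key: from a derivation + soliton equation extract the two scalar equations
  have key : ∀ (c : ℝ) (D : V →ₗ[ℝ] V), IsDerivation (br s m) D →
      Ric = c • (LinearMap.id : V →ₗ[ℝ] V) + D → s = m ∧ c = -2 * m ^ 2 := by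
    intro c D hD hEq
    have hD' : ∀ X j, D X j = Ric X j - c * X j := by
      intro X j
      have := congrFun (LinearMap.ext_iff.mp hEq X) j
      simp only [LinearMap.add_apply, LinearMap.smul_apply, LinearMap.id_apply,
        Pi.add_apply, Pi.smul_apply, smul_eq_mul] at this
      linarith
    have e1 := congrFun (hD (E 0) (E 1)) 4
    have e2 := congrFun (hD (E 2) (E 3)) 4
    simp (config := { decide := true }) only [br, E, Pi.single_apply] at e1 e2
    norm_num at e1 e2
    -- substitute values
    have r0 := ric_apply s m Ric hRic (E 0) 0
    have r1 := ric_apply s m Ric hRic (E 1) 1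
    have r2 := ric_apply s m Ric hRic (E 2) 2
    have r3 := ric_apply s m Ric hRic (E 3) 3
    have r4 := ric_apply s m Ric hRic (E 4) 4
    simp [E, Pi.single_apply] at r0 r1 r2 r3 r4
    rw [hD' (Pi.single 4 1) 4, hD' (Pi.single 0 1) 0, hD' (Pi.single 1 1) 1] at e1
    rw [hD' (Pi.single 4 1) 4, hD' (Pi.single 2 1) 2, hD' (Pi.single 3 1) 3] at e2
    simp [Pi.single_apply, r0, r1, r2, r3, r4] at e1 e2
    have q1 : (s^2+m^2)/2 - c = -s^2/2 - c + (-s^2/2 - c) :=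
      mul_left_cancel₀ (ne_of_gt hs) (by linear_combination e1)
    have q2 : (s^2+m^2)/2 - c = -m^2/2 - c + (-m^2/2 - c) :=
      mul_left_cancel₀ (ne_of_gt hm) (by linear_combination e2)
    have hsq : s^2 = m^2 := by linarith
    have hse : s = m := by
      have h0 : (s - m) * (s + m) = 0 := by linear_combination hsq
      rcases mul_eq_zero.mp h0 with h | h
      · linarith
      · linarith
    refine ⟨hse, ?_⟩
    rw [hse] at q2
    linarith
  refine ⟨⟨fun ⟨c, D, hD, hEq⟩ => (key c D hD hEq).1, ?_⟩,
    fun c D hD hEq => (key c D hD hEq).2⟩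
  intro hse
  subst hse
  refine ⟨-2 * s ^ 2, diagMap ![3/2*s^2, 3/2*s^2, 3/2*s^2, 3/2*s^2, 3*s^2], ?_, ?_⟩
  · intro X Y
    funext j
    simp only [br, diagMap, LinearMap.coe_mk, AddHom.coe_mk, E, Pi.add_apply,
      Pi.smul_apply, Pi.single_apply, smul_eq_mul]
    fin_cases j <;> simp <;> ring
  · apply LinearMap.ext
    intro X
    funext j
    have := ric_apply s s Ric hRic X j
    rw [LinearMap.add_apply, LinearMap.smul_apply, LinearMap.id_apply, this]
    simp only [diagMap, LinearMap.coe_mk, AddHom.coe_mk, Pi.add_apply, Pi.smul_apply,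
      smul_eq_mul]
    fin_cases j <;> simp <;> ring
end

end Nilsoliton0
end

section
/- For real numbers m, v > 0 and s ≥ 0, the system of equations in the unknown c ∈ ℝ given by m·v·s = 0, c·m + (3/2)(m³ + s²m) = 0, c·s + (3/2)(s³ + m²s) + 2v²s = 0, c·v + (3/2)s²v + 2v³ = 0, and c·v + (1/2)s²v + 2v³ = 0 has a solution if and only if s = 0 and v = (√3/2)·m, in which case the unique solution is c = −(3/2)m². -/
open scoped BigOperators

namespace Nilsoliton16

noncomputable section

abbrev V : Type := Fin 5 → ℝ

/-- The orthonormal basis vectors E₁,…,E₅ (indexed 0,…,4). -/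
def E (i : Fin 5) : V := Pi.single i 1

/-- The inner product making `E` an orthonormal basis. -/
def ip (x y : V) : ℝ := ∑ i, x i * y i

/-- `D` is a derivation of the bracket `br`. -/
def IsDerivation (br : V → V → V) (D : V →ₗ[ℝ] V) : Prop :=
  ∀ X Y : V, D (br X Y) = br (D X) Y + br X (D Y)

/-- `Ric` is the Ricci operator of the nilpotent Lie group with left-invariant
metric determined by the bracket `br` and the orthonormal basis `E`. -/
def IsRicci (br : V → V → V) (Ric : V →ₗ[ℝ] V) : Prop :=
  ∀ X Y : V, ip (Ric X) Y =
      -(1/2) * (∑ i : Fin 5, ip (br X (E i)) (br Y (E i)))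
      + (1/4) * (∑ i : Fin 5, ∑ j : Fin 5, ip (br (E i) (E j)) X * ip (br (E i) (E j)) Y)

theorem stmt16 (m v s : ℝ) (hm : 0 < m) (hv : 0 < v) (hs : 0 ≤ s) :
    ((∃ c : ℝ,
      m * v * s = 0 ∧
      c * m + (3/2) * (m ^ 3 + s ^ 2 * m) = 0 ∧
      c * s + (3/2) * (s ^ 3 + m ^ 2 * s) + 2 * v ^ 2 * s = 0 ∧
      c * v + (3/2) * s ^ 2 * v + 2 * v ^ 3 = 0 ∧
      c * v + (1/2) * s ^ 2 * v + 2 * v ^ 3 = 0) ↔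
      (s = 0 ∧ v = (Real.sqrt 3 / 2) * m)) ∧
    (∀ c : ℝ,
      (m * v * s = 0 ∧
      c * m + (3/2) * (m ^ 3 + s ^ 2 * m) = 0 ∧
      c * s + (3/2) * (s ^ 3 + m ^ 2 * s) + 2 * v ^ 2 * s = 0 ∧
      c * v + (3/2) * s ^ 2 * v + 2 * v ^ 3 = 0 ∧
      c * v + (1/2) * s ^ 2 * v + 2 * v ^ 3 = 0) →
      c = -(3/2) * m ^ 2) := by
  have hsq3 : Real.sqrt 3 ^ 2 = 3 := Real.sq_sqrt (by norm_num)
  have key : ∀ c : ℝ,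
      (m * v * s = 0 ∧
      c * m + (3/2) * (m ^ 3 + s ^ 2 * m) = 0 ∧
      c * s + (3/2) * (s ^ 3 + m ^ 2 * s) + 2 * v ^ 2 * s = 0 ∧
      c * v + (3/2) * s ^ 2 * v + 2 * v ^ 3 = 0 ∧
      c * v + (1/2) * s ^ 2 * v + 2 * v ^ 3 = 0) →
      s = 0 ∧ c = -(3/2) * m ^ 2 ∧ v = (Real.sqrt 3 / 2) * m := by
    intro c ⟨h1, h2, h3, h4, h5⟩
    have hs0 : s = 0 := by
      have : s ^ 2 * v = 0 := by linarith
      have hs2 : s ^ 2 = 0 := by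
        rcases mul_eq_zero.mp this with h | h
        · exact h
        · exact absurd h hv.ne'
      exact pow_eq_zero_iff (n := 2) (by norm_num) |>.mp hs2
    subst hs0
    have hc : c = -(3/2) * m ^ 2 := by
      have : m * (c + (3/2) * m ^ 2) = 0 := by ring_nf; ring_nf at h2; linarith
      rcases mul_eq_zero.mp this with h | h
      · exact absurd h hm.ne'
      · linarith
    subst hc
    refine ⟨rfl, rfl, ?_⟩
    have hv2 : v ^ 2 = 3 / 4 * m ^ 2 := by
      have : v * (2 * v ^ 2 - (3/2) * m ^ 2) = 0 := by ring_nf; ring_nf at h4; linarith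
      rcases mul_eq_zero.mp this with h | h
      · exact absurd h hv.ne'
      · linarith
    have hw : (Real.sqrt 3 / 2 * m) ^ 2 = 3 / 4 * m ^ 2 := by
      rw [mul_pow, div_pow, hsq3]; ring
    have hwpos : 0 < Real.sqrt 3 / 2 * m := by
      have : 0 < Real.sqrt 3 := Real.sqrt_pos.mpr (by norm_num)
      positivity
    nlinarith [sq_nonneg (v - Real.sqrt 3 / 2 * m), sq_nonneg (v + Real.sqrt 3 / 2 * m)]
  constructor
  · constructor
    · rintro ⟨c, hc⟩
      obtain ⟨h1, h2, h3⟩ := key c hc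
      exact ⟨h1, h3⟩
    · rintro ⟨hs0, hv0⟩
      refine ⟨-(3/2) * m ^ 2, ?_, ?_, ?_, ?_, ?_⟩ <;>
        subst hs0 <;> subst hv0 <;> ring_nf <;> linear_combination (m ^ 3 * Real.sqrt 3 / 4) * hsq3
  · intro c hc
    exact (key c hc).2.1

end

end Nilsoliton16
end
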